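/- Let d ≥ 1, N ≥ 1, and let β₀ ∈ ℝ with -1 ≤ β₀ ≤ 0 and 1 + (1+β₀)^N - (1-β₀)^N = 0. Then for every β ∈ ℝ with β ≥ β₀ and every X : Matrix (Fin N → Fin d) (Fin N → Fin d) ℂ with Matrix.rank X ≤ 2, one has 0 ≤ Σ over S : Finset (Fin N) of β^{S.card} · ‖Tr_S(X)‖_F². (In the paper's terms: if β₀ is the zero of 1 + (1+β)^N - (1-β)^N in [-1,0], then the Werner state ρ_w is N-undistillable whenever β ≥ β₀.) -/

import Mathlib

/-- Partial trace of `X : Matrix (Fin N → Fin d) (Fin N → Fin d) ℂ` over the subsystems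
in the finset `S`. -/
noncomputable def ptrace {N d : ℕ} (S : Finset (Fin N))
    (X : Matrix (Fin N → Fin d) (Fin N → Fin d) ℂ) :
    Matrix ({n // n ∈ Sᶜ} → Fin d) ({n // n ∈ Sᶜ} → Fin d) ℂ :=
  Matrix.of fun a b => ∑ e : {n // n ∈ S} → Fin d,
    X (fun n => if h : n ∈ S then e ⟨n, h⟩ else a ⟨n, Finset.mem_compl.mpr h⟩)
      (fun n => if h : n ∈ S then e ⟨n, h⟩ else b ⟨n, Finset.mem_compl.mpr h⟩)

namespace WernerAux

variable {N d : ℕ}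

def merge (S : Finset (Fin N)) (a : {n // n ∈ Sᶜ} → Fin d) (e : {n // n ∈ S} → Fin d) :
    Fin N → Fin d :=
  fun n => if h : n ∈ S then e ⟨n, h⟩ else a ⟨n, Finset.mem_compl.mpr h⟩

lemma ptrace_eq (S : Finset (Fin N)) (X : Matrix (Fin N → Fin d) (Fin N → Fin d) ℂ)
    (a b : {n // n ∈ Sᶜ} → Fin d) :
    ptrace S X a b = ∑ e : {n // n ∈ S} → Fin d, X (merge S a e) (merge S b e) := rfl

lemma merge_bijective (S : Finset (Fin N)) :
    Function.Bijective (fun ae : ({n // n ∈ Sᶜ} → Fin d) × ({n // n ∈ S} → Fin d) =>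
      merge S ae.1 ae.2) := by
  constructor
  · rintro ⟨a, e⟩ ⟨a', e'⟩ h
    simp only [Prod.mk.injEq]
    constructor
    · funext n
      have := congrFun h n.1
      have hn : ¬ (n.1 ∈ S) := Finset.mem_compl.mp n.2
      simpa [merge, hn] using this
    · funext n
      have := congrFun h n.1
      simpa [merge, n.2] using this
  · intro p
    refine ⟨⟨fun n => p n.1, fun n => p n.1⟩, ?_⟩
    funext n
    by_cases h : n ∈ S <;> simp [merge, h]

lemma sum_merge (S : Finset (Fin N)) (f : (Fin N → Fin d) → ℝ) :
    ∑ a : {n // n ∈ Sᶜ} → Fin d, ∑ e : {n // n ∈ S} → Fin d, f (merge S a e)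
      = ∑ p : Fin N → Fin d, f p := by
  have := Fintype.sum_bijective _ (merge_bijective S)
    (fun ae : ({n // n ∈ Sᶜ} → Fin d) × ({n // n ∈ S} → Fin d) => f (merge S ae.1 ae.2)) f
    (fun ae => rfl)
  rw [← this, Fintype.sum_prod_type]

end WernerAux

namespace WernerAux
variable {N d : ℕ}

lemma cs_complex {ι : Type*} [Fintype ι] (x y : ι → ℂ) :
    ‖∑ e, x e * y e‖ ^ 2 ≤ (∑ e, ‖x e‖ ^ 2) * (∑ e, ‖y e‖ ^ 2) := by
  calc ‖∑ e, x e * y e‖ ^ 2 ≤ (∑ e, ‖x e‖ * ‖y e‖) ^ 2 := by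
        apply pow_le_pow_left₀ (norm_nonneg _)
        refine le_trans (norm_sum_le _ _) ?_
        apply le_of_eq
        exact Finset.sum_congr rfl fun e _ => norm_mul _ _
    _ ≤ _ := Finset.sum_mul_sq_le_sq_mul_sq _ _ _

lemma cS_bound (S : Finset (Fin N)) (X : Matrix (Fin N → Fin d) (Fin N → Fin d) ℂ)
    {n : ℕ} (u c : Fin n → (Fin N → Fin d) → ℂ)
    (hX : ∀ p q, X p q = ∑ i, u i p * c i q) :
    ∑ a : {n // n ∈ Sᶜ} → Fin d, ∑ b : {n // n ∈ Sᶜ} → Fin d, ‖ptrace S X a b‖ ^ 2 ≤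
      (n : ℝ) * ∑ i, (∑ p, ‖u i p‖ ^ 2) * (∑ q, ‖c i q‖ ^ 2) := by
  have step : ∀ (R C : Fin n → ({n // n ∈ Sᶜ} → Fin d) → ℝ),
      ∑ a, ∑ b, ∑ i, R i a * C i b = ∑ i, (∑ a, R i a) * (∑ b, C i b) := by
    intro R C
    calc ∑ a, ∑ b, ∑ i, R i a * C i b
        = ∑ a, ∑ i, R i a * ∑ b, C i b := by
          refine Finset.sum_congr rfl fun a _ => ?_
          rw [Finset.sum_comm]
          exact Finset.sum_congr rfl fun i _ => (Finset.mul_sum _ _ _).symm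
      _ = ∑ i, (∑ a, R i a) * ∑ b, C i b := by
          rw [Finset.sum_comm]
          exact Finset.sum_congr rfl fun i _ => (Finset.sum_mul _ _ _).symm
  have hab : ∀ a b, ‖ptrace S X a b‖ ^ 2 ≤
      (n : ℝ) * ∑ i, (∑ e, ‖u i (merge S a e)‖ ^ 2) * (∑ e, ‖c i (merge S b e)‖ ^ 2) := by
    intro a b
    have hentry : ptrace S X a b = ∑ i, ∑ e, u i (merge S a e) * c i (merge S b e) := by
      rw [ptrace_eq]
      simp_rw [hX]
      rw [Finset.sum_comm]
    rw [hentry]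
    calc ‖∑ i, ∑ e, u i (merge S a e) * c i (merge S b e)‖ ^ 2
        ≤ (∑ i, ‖∑ e, u i (merge S a e) * c i (merge S b e)‖) ^ 2 :=
          pow_le_pow_left₀ (norm_nonneg _) (norm_sum_le _ _) 2
      _ ≤ (Finset.univ : Finset (Fin n)).card *
            ∑ i, ‖∑ e, u i (merge S a e) * c i (merge S b e)‖ ^ 2 :=
          sq_sum_le_card_mul_sum_sq
      _ ≤ (n : ℝ) * ∑ i, (∑ e, ‖u i (merge S a e)‖ ^ 2) * (∑ e, ‖c i (merge S b e)‖ ^ 2) := by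
          rw [Finset.card_univ, Fintype.card_fin]
          apply mul_le_mul_of_nonneg_left _ (Nat.cast_nonneg n)
          exact Finset.sum_le_sum fun i _ => cs_complex _ _
  calc ∑ a, ∑ b, ‖ptrace S X a b‖ ^ 2
      ≤ ∑ a, ∑ b, ((n : ℝ) * ∑ i, (∑ e, ‖u i (merge S a e)‖ ^ 2) *
          (∑ e, ‖c i (merge S b e)‖ ^ 2)) :=
        Finset.sum_le_sum fun a _ => Finset.sum_le_sum fun b _ => hab a b
    _ = (n : ℝ) * ∑ i, (∑ p, ‖u i p‖ ^ 2) * (∑ q, ‖c i q‖ ^ 2) := by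
        simp_rw [← Finset.mul_sum]
        rw [step]
        congr 1
        refine Finset.sum_congr rfl fun i _ => ?_
        rw [sum_merge S (fun p => ‖u i p‖ ^ 2), sum_merge S (fun q => ‖c i q‖ ^ 2)]

end WernerAux

namespace WernerAux

lemma submodule_expand {ι : Type*} [Fintype ι]
    (V : Submodule ℂ (EuclideanSpace ℂ ι)) (x : EuclideanSpace ℂ ι) (hx : x ∈ V) (p : ι) :
    x p = ∑ i : Fin (Module.finrank ℂ V),
      ((stdOrthonormalBasis ℂ V i : EuclideanSpace ℂ ι) p) *
        inner (𝕜 := ℂ) (stdOrthonormalBasis ℂ V i : EuclideanSpace ℂ ι) x := by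
  set b := stdOrthonormalBasis ℂ V with hb
  have h1 := congrArg
    (fun v : V => EuclideanSpace.projₗ (𝕜 := ℂ) p (v : EuclideanSpace ℂ ι))
    (b.sum_repr' ⟨x, hx⟩)
  simp only [Submodule.coe_sum, map_sum, Submodule.coe_smul, map_smul, smul_eq_mul,
    Submodule.coe_inner] at h1
  rw [show (∑ i : Fin (Module.finrank ℂ V), ((b i : EuclideanSpace ℂ ι) p) *
      inner (𝕜 := ℂ) (b i : EuclideanSpace ℂ ι) x) =
      ∑ i : Fin (Module.finrank ℂ V), inner (𝕜 := ℂ) (b i : EuclideanSpace ℂ ι) x *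
        EuclideanSpace.projₗ (𝕜 := ℂ) p (b i : EuclideanSpace ℂ ι) from
    Finset.sum_congr rfl fun i _ => mul_comm _ _]
  rw [h1]
  rfl

lemma exists_decomp {ι : Type*} [Fintype ι] [DecidableEq ι] (X : Matrix ι ι ℂ) :
    ∃ (n : ℕ) (u cc : Fin n → ι → ℂ), n = X.rank ∧
      (∀ p q, X p q = ∑ i, u i p * cc i q) ∧
      (∀ i, ∑ p, ‖u i p‖ ^ 2 = 1) ∧
      (∑ i, ∑ q, ‖cc i q‖ ^ 2 ≤ ∑ p, ∑ q, ‖X p q‖ ^ 2) := by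
  classical
  set col : ι → EuclideanSpace ℂ ι :=
    fun q => (WithLp.equiv 2 (ι → ℂ)).symm (fun p => X p q) with hcoldef
  obtain ⟨V, hrank, hcol⟩ : ∃ V : Submodule ℂ (EuclideanSpace ℂ ι),
      Module.finrank ℂ V = X.rank ∧ ∀ q, col q ∈ V := by
    refine ⟨(LinearMap.range X.mulVecLin).map
      ((WithLp.linearEquiv 2 ℂ (ι → ℂ)).symm :
        (ι → ℂ) →ₗ[ℂ] EuclideanSpace ℂ ι), ?_, ?_⟩
    · exact LinearEquiv.finrank_map_eq _ _
    · intro q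
      refine Submodule.mem_map_of_mem (p := LinearMap.range X.mulVecLin) ?_
      rw [Matrix.range_mulVecLin]
      exact Submodule.subset_span ⟨q, rfl⟩
  set b := stdOrthonormalBasis ℂ V with hbdef
  have hu_on : Orthonormal ℂ (⇑V.subtypeₗᵢ ∘ ⇑b) :=
    b.orthonormal.comp_linearIsometry V.subtypeₗᵢ
  refine ⟨Module.finrank ℂ V, fun i p => (b i : EuclideanSpace ℂ ι) p,
    fun i q => inner (𝕜 := ℂ) (b i : EuclideanSpace ℂ ι) (col q),
    hrank.symm ▸ rfl, ?_, ?_, ?_⟩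
  · intro p q
    exact submodule_expand V (col q) (hcol q) p
  · intro i
    have hn1 : ‖(⇑V.subtypeₗᵢ ∘ ⇑b) i‖ = 1 := hu_on.1 i
    rw [EuclideanSpace.norm_eq] at hn1
    exact Real.sqrt_eq_one.mp hn1
  · calc ∑ i, ∑ q, ‖inner (𝕜 := ℂ) (b i : EuclideanSpace ℂ ι) (col q)‖ ^ 2
        = ∑ q, ∑ i, ‖inner (𝕜 := ℂ) (b i : EuclideanSpace ℂ ι) (col q)‖ ^ 2 :=
          Finset.sum_comm
      _ ≤ ∑ q : ι, ‖col q‖ ^ 2 :=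
          Finset.sum_le_sum fun q _ => hu_on.sum_inner_products_le (col q)
      _ = ∑ q, ∑ p, ‖X p q‖ ^ 2 := by
          refine Finset.sum_congr rfl fun q _ => ?_
          rw [EuclideanSpace.norm_eq, Real.sq_sqrt (by positivity)]
          exact Finset.sum_congr rfl fun p _ => rfl
      _ = ∑ p, ∑ q, ‖X p q‖ ^ 2 := Finset.sum_comm

variable {N d : ℕ}

lemma key_bound (X : Matrix (Fin N → Fin d) (Fin N → Fin d) ℂ) (h : X.rank ≤ 2)
    (S : Finset (Fin N)) :
    ∑ a : {n // n ∈ Sᶜ} → Fin d, ∑ b : {n // n ∈ Sᶜ} → Fin d, ‖ptrace S X a b‖ ^ 2 ≤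
      2 * ∑ p, ∑ q, ‖X p q‖ ^ 2 := by
  obtain ⟨n, u, cc, hn, hX, hun, hb⟩ := exists_decomp X
  have hn2 : (n : ℝ) ≤ 2 := by exact_mod_cast hn ▸ h
  calc ∑ a : {n // n ∈ Sᶜ} → Fin d, ∑ b : {n // n ∈ Sᶜ} → Fin d, ‖ptrace S X a b‖ ^ 2
      ≤ (n : ℝ) * ∑ i, (∑ p, ‖u i p‖ ^ 2) * (∑ q, ‖cc i q‖ ^ 2) := cS_bound S X u cc hX
    _ = (n : ℝ) * ∑ i, ∑ q, ‖cc i q‖ ^ 2 := by simp_rw [hun, one_mul]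
    _ ≤ 2 * ∑ p, ∑ q, ‖X p q‖ ^ 2 := by
        apply mul_le_mul hn2 hb _ (by norm_num)
        positivity

end WernerAux

namespace WernerAux
variable {N d : ℕ}

lemma sum_ptrace_empty (X : Matrix (Fin N → Fin d) (Fin N → Fin d) ℂ) :
    ∑ a : {n // n ∈ (∅ : Finset (Fin N))ᶜ} → Fin d,
      ∑ b : {n // n ∈ (∅ : Finset (Fin N))ᶜ} → Fin d, ‖ptrace ∅ X a b‖ ^ 2
      = ∑ p, ∑ q, ‖X p q‖ ^ 2 := by
  haveI : IsEmpty {n // n ∈ (∅ : Finset (Fin N))} :=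
    ⟨fun x => absurd x.2 (Finset.notMem_empty x.1)⟩
  have hm : ∀ f : (Fin N → Fin d) → ℝ,
      ∑ a : {n // n ∈ (∅ : Finset (Fin N))ᶜ} → Fin d, f (merge ∅ a default) = ∑ p, f p := by
    intro f
    rw [← sum_merge (∅ : Finset (Fin N)) f]
    exact Finset.sum_congr rfl fun a _ => (Fintype.sum_unique (fun e => f (merge ∅ a e))).symm
  have hpt : ∀ a b, ptrace (∅ : Finset (Fin N)) X a b
      = X (merge ∅ a default) (merge ∅ b default) := by
    intro a b
    rw [ptrace_eq]
    exact Fintype.sum_unique (fun e => X (merge ∅ a e) (merge ∅ b e))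
  calc ∑ a : {n // n ∈ (∅ : Finset (Fin N))ᶜ} → Fin d,
        ∑ b : {n // n ∈ (∅ : Finset (Fin N))ᶜ} → Fin d, ‖ptrace ∅ X a b‖ ^ 2
      = ∑ a : {n // n ∈ (∅ : Finset (Fin N))ᶜ} → Fin d,
          ∑ b : {n // n ∈ (∅ : Finset (Fin N))ᶜ} → Fin d,
            ‖X (merge ∅ a default) (merge ∅ b default)‖ ^ 2 := by
        refine Finset.sum_congr rfl fun a _ => Finset.sum_congr rfl fun b _ => ?_
        rw [hpt]
    _ = ∑ a : {n // n ∈ (∅ : Finset (Fin N))ᶜ} → Fin d,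
          ∑ q, ‖X (merge ∅ a default) q‖ ^ 2 := by
        refine Finset.sum_congr rfl fun a _ => ?_
        exact hm (fun q => ‖X (merge ∅ a default) q‖ ^ 2)
    _ = ∑ p, ∑ q, ‖X p q‖ ^ 2 := hm (fun p => ∑ q, ‖X p q‖ ^ 2)

lemma sum_pow_card (x : ℝ) : ∑ S : Finset (Fin N), x ^ S.card = (x + 1) ^ N := by
  classical
  have h := Finset.prod_add (fun _ : Fin N => x) (fun _ => (1 : ℝ)) Finset.univ
  rw [Finset.powerset_univ] at h
  simpa [Finset.prod_const, Finset.card_univ] using h.symm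

end WernerAux

/-- If `β₀ ∈ [-1, 0]` is a zero of `1 + (1+β)^N - (1-β)^N`, then for all
`β ≥ β₀` and every rank-≤2 matrix `X`, `∑_S β^{|S|} ‖Tr_S X‖_F² ≥ 0`
(the Werner state is `N`-undistillable). -/
theorem werner_n_undistillable_of_ge_beta_zero
    (d N : ℕ) (hd : 1 ≤ d) (hN : 1 ≤ N) (β₀ : ℝ) (hβ₀₁ : -1 ≤ β₀) (hβ₀₂ : β₀ ≤ 0)
    (hzero : 1 + (1 + β₀) ^ N - (1 - β₀) ^ N = 0) :
    ∀ β : ℝ, β₀ ≤ β →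
      ∀ X : Matrix (Fin N → Fin d) (Fin N → Fin d) ℂ, X.rank ≤ 2 →
        0 ≤ ∑ S : Finset (Fin N), β ^ S.card *
              ∑ a : {n // n ∈ Sᶜ} → Fin d, ∑ b : {n // n ∈ Sᶜ} → Fin d,
                ‖ptrace S X a b‖ ^ 2 := by
  intro β hβ X hrk
  classical
  set c : Finset (Fin N) → ℝ :=
    fun S => ∑ a : {n // n ∈ Sᶜ} → Fin d, ∑ b : {n // n ∈ Sᶜ} → Fin d,
      ‖ptrace S X a b‖ ^ 2 with hcdef
  have hc : ∀ S, 0 ≤ c S := by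
    intro S
    apply Finset.sum_nonneg
    intro a _
    apply Finset.sum_nonneg
    intro b _
    positivity
  suffices h : 0 ≤ ∑ S : Finset (Fin N), β ^ S.card * c S from h
  rcases le_or_gt 0 β with hβpos | hβneg
  · exact Finset.sum_nonneg fun S _ => mul_nonneg (pow_nonneg hβpos _) (hc S)
  -- now β < 0
  set F : ℝ := ∑ p, ∑ q, ‖X p q‖ ^ 2 with hFdef
  have hF : 0 ≤ F := by
    apply Finset.sum_nonneg; intro p _; apply Finset.sum_nonneg; intro q _; positivity
  have hcF : ∀ S, c S ≤ 2 * F := fun S => WernerAux.key_bound X hrk S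
  have hcempty : c ∅ = F := WernerAux.sum_ptrace_empty X
  obtain ⟨t, hβt, ht0, htt0⟩ : ∃ t : ℝ, β = -t ∧ 0 ≤ t ∧ t ≤ -β₀ :=
    ⟨-β, by ring, by linarith, by linarith⟩
  have ht1 : -β₀ ≤ 1 := by linarith
  -- lower bound for each nonempty S
  have hlb : ∀ S : Finset (Fin N), S ≠ ∅ →
      F * ((-t) ^ S.card - t ^ S.card) ≤ β ^ S.card * c S := by
    intro S _
    rw [hβt]
    rcases Nat.even_or_odd S.card with he | ho
    · rw [he.neg_pow, sub_self, mul_zero]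
      exact mul_nonneg (pow_nonneg ht0 _) (hc S)
    · rw [ho.neg_pow]
      nlinarith [mul_nonneg (pow_nonneg ht0 S.card) (sub_nonneg.mpr (hcF S)),
        mul_nonneg (pow_nonneg ht0 S.card) (hc S)]
  have hsum1 : ∑ S : Finset (Fin N), ((-t) ^ S.card - t ^ S.card)
      = (1 - t) ^ N - (1 + t) ^ N := by
    rw [Finset.sum_sub_distrib, WernerAux.sum_pow_card, WernerAux.sum_pow_card]
    ring_nf
  have hmain : F * (1 + (1 - t) ^ N - (1 + t) ^ N) ≤ ∑ S : Finset (Fin N), β ^ S.card * c S := by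
    have e1 : F * (1 + (1 - t) ^ N - (1 + t) ^ N)
        = F + ∑ S : Finset (Fin N), F * ((-t) ^ S.card - t ^ S.card) := by
      rw [← Finset.mul_sum, hsum1]; ring
    have e2 : ∑ S : Finset (Fin N), F * ((-t) ^ S.card - t ^ S.card)
        = ∑ S ∈ Finset.univ.erase (∅ : Finset (Fin N)), F * ((-t) ^ S.card - t ^ S.card) := by
      rw [← Finset.add_sum_erase _ _ (Finset.mem_univ (∅ : Finset (Fin N)))]
      simp
    have e3 : (∑ S : Finset (Fin N), β ^ S.card * c S)
        = β ^ (∅ : Finset (Fin N)).card * c ∅ +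
          ∑ S ∈ Finset.univ.erase (∅ : Finset (Fin N)), β ^ S.card * c S :=
      (Finset.add_sum_erase _ (fun S => β ^ S.card * c S)
        (Finset.mem_univ (∅ : Finset (Fin N)))).symm
    rw [e1, e2, e3, Finset.card_empty, pow_zero, one_mul, hcempty]
    apply add_le_add_right
    refine Finset.sum_le_sum fun S hS => hlb S ?_
    exact (Finset.mem_erase.mp hS).1
  have hfac : 0 ≤ 1 + (1 - t) ^ N - (1 + t) ^ N := by
    have h1 : (1 + t) ^ N ≤ (1 + -β₀) ^ N :=
      pow_le_pow_left₀ (by linarith) (by linarith) N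
    have h2 : (1 - -β₀) ^ N ≤ (1 - t) ^ N :=
      pow_le_pow_left₀ (by linarith) (by linarith) N
    have hz : 1 + (1 - -β₀) ^ N - (1 + -β₀) ^ N = 0 := by
      rw [show (1 : ℝ) - -β₀ = 1 + β₀ by ring, show (1 : ℝ) + -β₀ = 1 - β₀ by ring]
      exact hzero
    linarith
  calc (0 : ℝ) ≤ F * (1 + (1 - t) ^ N - (1 + t) ^ N) := mul_nonneg hF hfac
    _ ≤ _ := hmain
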